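/- Let ψ : ℝ → ℝ₊ be continuous, positive-definite, symmetric, and satisfy generalized homogeneity with a class-K∞ function f_ψ. Let {x_t} be a sequence in ℝⁿ and T > 0 a fixed integer. Then the following are equivalent: (i) there exist class-K∞ functions α, β with α(‖θ‖) ≤ Σ_{k=t+1}^{t+T} ψ(x_kᵀθ) ≤ β(‖θ‖) for all t ∈ ℕ and θ ∈ ℝⁿ; (ii) there exist constants γ₁, γ₂ > 0 with γ₁ ≤ Σ_{k=t+1}^{t+T} ψ(x_kᵀθ/‖θ‖) ≤ γ₂ for all t ∈ ℕ and all nonzero θ ∈ ℝⁿ. -/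

import Mathlib

open Finset Filter

/-- A class-K∞ function: continuous on [0,∞), zero at zero, strictly increasing
on [0,∞), and tending to ∞ at ∞. -/
def ClassKInf (f : ℝ → ℝ) : Prop :=
  ContinuousOn f (Set.Ici 0) ∧ f 0 = 0 ∧ StrictMonoOn f (Set.Ici 0) ∧
    Tendsto f atTop atTop

/-- Dot product on ℝⁿ. -/
def dot {n : ℕ} (x θ : Fin n → ℝ) : ℝ := ∑ i, x i * θ i

/-- `N` is a norm on ℝⁿ. -/
def IsNorm {n : ℕ} (N : (Fin n → ℝ) → ℝ) : Prop :=
  (∀ x, 0 ≤ N x) ∧ (∀ x, N x = 0 ↔ x = 0) ∧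
    (∀ (a : ℝ) (x), N (a • x) = |a| * N x) ∧ (∀ x y, N (x + y) ≤ N x + N y)

lemma kinf_pos {f : ℝ → ℝ} (hf : ClassKInf f) {s : ℝ} (hs : 0 < s) : 0 < f s := by
  have := hf.2.2.1 Set.self_mem_Ici (Set.mem_Ici.mpr hs.le) hs
  rwa [hf.2.1] at this

lemma dot_smul' {n : ℕ} (x θ : Fin n → ℝ) (a : ℝ) : dot x (a • θ) = a * dot x θ := by
  unfold dot
  rw [Finset.mul_sum]
  exact Finset.sum_congr rfl fun i _ => by simp [Pi.smul_apply, smul_eq_mul]; ring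

/-- equivalence of the two formulations of the generalized
persistence-of-excitation condition. -/
theorem stmt_3 {n : ℕ} (ψ : ℝ → ℝ) (fψ : ℝ → ℝ)
    (hcont : Continuous ψ) (hnn : ∀ e, 0 ≤ ψ e)
    (hpd : ∀ e, ψ e = 0 ↔ e = 0) (hsym : ∀ e, ψ (-e) = ψ e)
    (hf : ClassKInf fψ)
    (hGH : ∀ (e r : ℝ), r ≠ 0 → fψ (1 / |r|) * ψ (r * e) ≤ ψ e)
    (x : ℕ → Fin n → ℝ) (T : ℕ) (hT : 0 < T)
    (N : (Fin n → ℝ) → ℝ) (hN : IsNorm N) :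
    (∃ α β : ℝ → ℝ, ClassKInf α ∧ ClassKInf β ∧
        ∀ (t : ℕ) (θ : Fin n → ℝ),
          α (N θ) ≤ ∑ k ∈ Finset.Icc (t + 1) (t + T), ψ (dot (x k) θ) ∧
          ∑ k ∈ Finset.Icc (t + 1) (t + T), ψ (dot (x k) θ) ≤ β (N θ)) ↔
    (∃ γ₁ γ₂ : ℝ, 0 < γ₁ ∧ 0 < γ₂ ∧
        ∀ (t : ℕ) (θ : Fin n → ℝ), θ ≠ 0 →
          γ₁ ≤ ∑ k ∈ Finset.Icc (t + 1) (t + T), ψ (dot (x k) θ / N θ) ∧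
          ∑ k ∈ Finset.Icc (t + 1) (t + T), ψ (dot (x k) θ / N θ) ≤ γ₂) := by
  constructor
  · rintro ⟨α, β, hα, hβ, h⟩
    refine ⟨α 1, β 1, kinf_pos hα one_pos, kinf_pos hβ one_pos, fun t θ hθ => ?_⟩
    have hNθ : 0 < N θ :=
      lt_of_le_of_ne (hN.1 θ) fun h0 => hθ ((hN.2.1 θ).1 h0.symm)
    have hNθ' : N ((N θ)⁻¹ • θ) = 1 := by
      rw [hN.2.2.1, abs_of_pos (inv_pos.mpr hNθ)]
      field_simp
    have hd : ∀ k, dot (x k) ((N θ)⁻¹ • θ) = dot (x k) θ / N θ := fun k => by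
      rw [dot_smul', inv_mul_eq_div]
    have := h t ((N θ)⁻¹ • θ)
    rw [hNθ'] at this
    simp only [hd] at this
    exact this
  · rintro ⟨γ₁, γ₂, hγ₁, hγ₂, h⟩
    refine ⟨fun s => γ₁ * fψ s, fun s => γ₂ / fψ s⁻¹, ?_, ?_, ?_⟩
    · refine ⟨continuousOn_const.mul hf.1, by simp [hf.2.1],
        fun a ha b hb hab => mul_lt_mul_of_pos_left (hf.2.2.1 ha hb hab) hγ₁,
        Tendsto.const_mul_atTop hγ₁ hf.2.2.2⟩
    · have hβ0 : γ₂ / fψ (0:ℝ)⁻¹ = 0 := by simp [hf.2.1]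
      refine ⟨?_, hβ0, ?_, ?_⟩
      · intro s hs
        rcases eq_or_lt_of_le (Set.mem_Ici.mp hs) with rfl | hs'
        · -- continuity at 0 within Ici 0
          unfold ContinuousWithinAt
          rw [← Set.Ioi_insert, nhdsWithin_insert, tendsto_sup]
          constructor
          · exact tendsto_pure_nhds _ 0
          · have h1 : Tendsto (fun s : ℝ => s⁻¹) (nhdsWithin 0 (Set.Ioi 0)) atTop :=
              tendsto_inv_nhdsGT_zero
            have h2 : Tendsto (fun s : ℝ => fψ s⁻¹) (nhdsWithin 0 (Set.Ioi 0)) atTop :=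
              hf.2.2.2.comp h1
            have h3 : Tendsto (fun s : ℝ => γ₂ * (fψ s⁻¹)⁻¹)
                (nhdsWithin 0 (Set.Ioi 0)) (nhds (γ₂ * 0)) :=
              (tendsto_inv_atTop_zero.comp h2).const_mul γ₂
            simpa [div_eq_mul_inv, hf.2.1] using h3
        · have hinv : ContinuousAt fψ s⁻¹ :=
            hf.1.continuousAt (Ici_mem_nhds (inv_pos.mpr hs'))
          have hc : ContinuousAt (fun s : ℝ => γ₂ / fψ s⁻¹) s := by
            refine ContinuousAt.div continuousAt_const
              (hinv.comp (continuousAt_id.inv₀ (ne_of_gt hs')))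
              (ne_of_gt (kinf_pos hf (inv_pos.mpr hs')))
          exact hc.continuousWithinAt
      · intro a ha b hb hab
        have hb' : 0 < b := lt_of_le_of_lt (Set.mem_Ici.mp ha) hab
        rcases eq_or_lt_of_le (Set.mem_Ici.mp ha) with rfl | ha'
        · simp only [inv_zero, hf.2.1, div_zero]
          exact div_pos hγ₂ (kinf_pos hf (inv_pos.mpr hb'))
        · have hinv : b⁻¹ < a⁻¹ := by
            rw [inv_lt_inv₀ hb' ha']
            exact hab
          have hlt : fψ b⁻¹ < fψ a⁻¹ :=
            hf.2.2.1 (Set.mem_Ici.mpr (inv_pos.mpr hb').le)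
              (Set.mem_Ici.mpr (inv_pos.mpr ha').le) hinv
          exact div_lt_div_of_pos_left hγ₂ (kinf_pos hf (inv_pos.mpr hb')) hlt
      · have h1 : Tendsto (fun s : ℝ => s⁻¹) atTop (nhdsWithin 0 (Set.Ioi 0)) :=
          tendsto_inv_atTop_nhdsGT_zero
        have h2 : Tendsto fψ (nhdsWithin 0 (Set.Ioi 0)) (nhdsWithin 0 (Set.Ioi 0)) := by
          rw [tendsto_nhdsWithin_iff]
          constructor
          · have := (hf.1 0 Set.self_mem_Ici)
            have := this.mono_left (nhdsWithin_mono 0 Set.Ioi_subset_Ici_self)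
            rwa [hf.2.1] at this
          · filter_upwards [self_mem_nhdsWithin] with s hs
            exact kinf_pos hf hs
        have h3 : Tendsto (fun s : ℝ => fψ s⁻¹) atTop (nhdsWithin 0 (Set.Ioi 0)) :=
          h2.comp h1
        have h4 : Tendsto (fun s : ℝ => (fψ s⁻¹)⁻¹) atTop atTop :=
          h3.inv_tendsto_nhdsGT_zero
        have h5 := h4.const_mul_atTop hγ₂
        simpa [div_eq_mul_inv] using h5
    · intro t θ
      by_cases hθ : θ = 0
      · subst hθ
        have hN0 : N 0 = 0 := (hN.2.1 0).2 rfl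
        have hd0 : ∀ k : ℕ, dot (x k) 0 = 0 := fun k => by simp [dot]
        simp [hN0, hd0, hf.2.1, (hpd 0).2 rfl]
      · have hNθ : 0 < N θ :=
          lt_of_le_of_ne (hN.1 θ) fun h0 => hθ ((hN.2.1 θ).1 h0.symm)
        obtain ⟨hlow, hhigh⟩ := h t θ hθ
        constructor
        · have key1 : ∀ k : ℕ, fψ (N θ) * ψ (dot (x k) θ / N θ) ≤ ψ (dot (x k) θ) := by
            intro k
            have := hGH (dot (x k) θ) (N θ)⁻¹ (by positivity)
            rwa [abs_inv, abs_of_pos hNθ, one_div, inv_inv, inv_mul_eq_div] at this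
          calc γ₁ * fψ (N θ) = fψ (N θ) * γ₁ := mul_comm _ _
            _ ≤ fψ (N θ) * ∑ k ∈ Finset.Icc (t + 1) (t + T), ψ (dot (x k) θ / N θ) :=
              mul_le_mul_of_nonneg_left hlow (kinf_pos hf hNθ).le
            _ = ∑ k ∈ Finset.Icc (t + 1) (t + T), fψ (N θ) * ψ (dot (x k) θ / N θ) :=
              Finset.mul_sum _ _ _
            _ ≤ ∑ k ∈ Finset.Icc (t + 1) (t + T), ψ (dot (x k) θ) :=
              Finset.sum_le_sum fun k _ => key1 k
        · have key2 : ∀ k : ℕ, fψ (N θ)⁻¹ * ψ (dot (x k) θ) ≤ ψ (dot (x k) θ / N θ) := by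
            intro k
            have := hGH (dot (x k) θ / N θ) (N θ) (ne_of_gt hNθ)
            rwa [abs_of_pos hNθ, one_div, mul_div_cancel₀ _ (ne_of_gt hNθ)] at this
          have hsum : fψ (N θ)⁻¹ * ∑ k ∈ Finset.Icc (t + 1) (t + T), ψ (dot (x k) θ) ≤ γ₂ := by
            calc fψ (N θ)⁻¹ * ∑ k ∈ Finset.Icc (t + 1) (t + T), ψ (dot (x k) θ)
                = ∑ k ∈ Finset.Icc (t + 1) (t + T), fψ (N θ)⁻¹ * ψ (dot (x k) θ) :=
                  Finset.mul_sum _ _ _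
              _ ≤ ∑ k ∈ Finset.Icc (t + 1) (t + T), ψ (dot (x k) θ / N θ) :=
                  Finset.sum_le_sum fun k _ => key2 k
              _ ≤ γ₂ := hhigh
          rw [le_div_iff₀ (kinf_pos hf (inv_pos.mpr hNθ))]
          linarith [hsum]
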